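/- The leftmost and rightmost copies suffice to find heterogeneity: if C is a set of shifted copies of a string p (shifts in [0, m/2]) and the copy with minimum shift and the copy with maximum shift differ at some commonly covered column, then that column witnesses that not all copies in C agree there; conversely if the min-shift and max-shift copies agree on all common columns and p is aperiodic with max shift > min shift, a contradiction follows. -/
import Mathlib


def Aperiodic {α : Type*} {m : ℕ} (p : Fin m → α) : Prop :=
  ∀ d, 1 ≤ d → d ≤ m / 2 → ∃ k, ∃ hk : k < m, d ≤ k ∧ p ⟨k, hk⟩ ≠ p ⟨k - d, by omega⟩

/-- The leftmost (min shift `a`) and rightmost (max shift `b`) copies suffice: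
(1) if they differ at a commonly covered column `j`, then not all copies in `C`
agree at `j`; (2) if they agree on all commonly covered columns and `p` is
aperiodic (with `a < b`), we get a contradiction. -/
theorem minmax_copies_suffice {α : Type*} {m : ℕ} (p : Fin m → α)
    (C : Finset ℕ) (hcard : 2 ≤ C.card) (hsh : ∀ s ∈ C, s ≤ m / 2)
    (a b : ℕ) (ha : a = C.min' (Finset.card_pos.mp (by omega)))
    (hb : b = C.max' (Finset.card_pos.mp (by omega))) :
    ((∀ j, b ≤ j → j < a + m →
        (∃ (h1 : j - a < m) (h2 : j - b < m), p ⟨j - a, h1⟩ ≠ p ⟨j - b, h2⟩) →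
        ¬ (∀ s ∈ C, ∀ s' ∈ C, ∀ (h : j - s < m) (h' : j - s' < m),
            p ⟨j - s, h⟩ = p ⟨j - s', h'⟩)) ∧
     (Aperiodic p →
       (∀ j, b ≤ j → j < a + m → ∀ (h1 : j - a < m) (h2 : j - b < m),
          p ⟨j - a, h1⟩ = p ⟨j - b, h2⟩) → False)) := by
  have hC : C.Nonempty := Finset.card_pos.mp (by omega)
  have haC : a ∈ C := ha ▸ C.min'_mem hC
  have hbC : b ∈ C := hb ▸ C.max'_mem hC
  have hab : a < b := by
    rw [ha, hb]; exact Finset.min'_lt_max'_of_card C (by omega)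
  constructor
  · intro j hbj hjm ⟨h1, h2, hne⟩ hall
    exact hne (hall a haC b hbC h1 h2)
  · intro hap hagree
    have hbm : b ≤ m / 2 := hsh b hbC
    obtain ⟨k, hk, hdk, hne⟩ := hap (b - a) (by omega) (by omega)
    have h1 : k + a - a < m := by omega
    have h2 : k + a - b < m := by omega
    have := hagree (k + a) (by omega) (by omega) h1 h2
    apply hne
    have e1 : (⟨k + a - a, h1⟩ : Fin m) = ⟨k, hk⟩ := by simp
    have e2 : (⟨k + a - b, h2⟩ : Fin m) = ⟨k - (b - a), by omega⟩ := by
      simp [Fin.ext_iff]; omega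
    rw [e1, e2] at this
    exact this
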